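/- arXiv:1407.4095 — 9 statements merged into one kernel-verified Lean document; each statement's English description precedes it below -/
import Mathlib

section
/- If a nonnegative matrix M ∈ ℝ^{p×q} admits a psd factorization of size k, then rank(M) ≤ k(k+1)/2. -/
open Matrix

/-- A psd factorization of size `k` of `M`: symmetric psd matrices `A i`, `B j`
with `M i j = trace (A i * B j)`. -/
def IsPsdFact {m n : Type*} (M : Matrix m n ℝ) {k : ℕ}
    (A : m → Matrix (Fin k) (Fin k) ℝ) (B : n → Matrix (Fin k) (Fin k) ℝ) : Prop :=
  (∀ i, (A i).PosSemidef) ∧ (∀ j, (B j).PosSemidef) ∧ ∀ i j, M i j = (A i * B j).trace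

/-- `M` admits a psd factorization of size `k`. -/
def HasPsdFact {m n : Type*} (M : Matrix m n ℝ) (k : ℕ) : Prop :=
  ∃ (A : m → Matrix (Fin k) (Fin k) ℝ) (B : n → Matrix (Fin k) (Fin k) ℝ), IsPsdFact M A B

/-- The psd rank of `M`: the smallest size of a psd factorization. -/
noncomputable def psdRank {m n : Type*} (M : Matrix m n ℝ) : ℕ :=
  sInf {k | HasPsdFact M k}

open Finset in
lemma sum_symm_pairs {k : ℕ} (f : Fin k → Fin k → ℝ) (hf : ∀ a b, f a b = f b a) :
    ∑ x : Fin k × Fin k, f x.1 x.2 =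
      ∑ x : {x : Fin k × Fin k // x.1 ≤ x.2},
        (if x.val.1 = x.val.2 then (1:ℝ) else 2) * f x.val.1 x.val.2 := by
  classical
  have h1 : (∑ x : {x : Fin k × Fin k // x.1 ≤ x.2},
        (if x.val.1 = x.val.2 then (1:ℝ) else 2) * f x.val.1 x.val.2)
      = ∑ x ∈ univ.filter (fun x : Fin k × Fin k => x.1 ≤ x.2),
        (if x.1 = x.2 then (1:ℝ) else 2) * f x.1 x.2 := by
    rw [← Finset.sum_subtype_eq_sum_filter, Finset.subtype_univ]
  rw [h1]
  rw [← Finset.sum_filter_add_sum_filter_not (univ : Finset (Fin k × Fin k))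
        (fun x => x.1 ≤ x.2) (fun x => f x.1 x.2)]
  rw [← Finset.sum_filter_add_sum_filter_not
        (univ.filter (fun x : Fin k × Fin k => x.1 ≤ x.2))
        (fun x => x.1 = x.2) (fun x => (if x.1 = x.2 then (1:ℝ) else 2) * f x.1 x.2)]
  have heq : ∑ x ∈ (univ.filter (fun x : Fin k × Fin k => x.1 ≤ x.2)).filter
        (fun x => x.1 = x.2), (if x.1 = x.2 then (1:ℝ) else 2) * f x.1 x.2
      = ∑ x ∈ (univ.filter (fun x : Fin k × Fin k => x.1 ≤ x.2)).filter
        (fun x => x.1 = x.2), f x.1 x.2 := by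
    refine Finset.sum_congr rfl fun x hx => ?_
    simp only [mem_filter] at hx
    rw [if_pos hx.2, one_mul]
  have hne : ∑ x ∈ (univ.filter (fun x : Fin k × Fin k => x.1 ≤ x.2)).filter
        (fun x => ¬ x.1 = x.2), (if x.1 = x.2 then (1:ℝ) else 2) * f x.1 x.2
      = ∑ x ∈ (univ.filter (fun x : Fin k × Fin k => x.1 ≤ x.2)).filter
        (fun x => ¬ x.1 = x.2), (f x.1 x.2 + f x.1 x.2) := by
    refine Finset.sum_congr rfl fun x hx => ?_
    simp only [mem_filter] at hx
    rw [if_neg hx.2]; ring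
  have hswap : ∑ x ∈ univ.filter (fun x : Fin k × Fin k => ¬ x.1 ≤ x.2), f x.1 x.2
      = ∑ x ∈ (univ.filter (fun x : Fin k × Fin k => x.1 ≤ x.2)).filter
          (fun x => ¬ x.1 = x.2), f x.1 x.2 := by
    apply Finset.sum_nbij' (i := Prod.swap) (j := Prod.swap)
    · intro a ha
      simp only [mem_filter, mem_univ, true_and, Prod.fst_swap, Prod.snd_swap] at ha ⊢
      have := lt_of_not_ge ha
      exact ⟨this.le, this.ne⟩
    · intro a ha
      simp only [mem_filter, mem_univ, true_and, Prod.fst_swap, Prod.snd_swap] at ha ⊢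
      exact not_le_of_gt (lt_of_le_of_ne ha.1 ha.2)
    · intro a _; exact Prod.swap_swap a
    · intro a _; exact Prod.swap_swap a
    · intro a _; exact hf a.1 a.2
  rw [heq, hne, Finset.sum_add_distrib, hswap,
    ← Finset.sum_filter_add_sum_filter_not
      (univ.filter (fun x : Fin k × Fin k => x.1 ≤ x.2))
      (fun x => x.1 = x.2) (fun x => f x.1 x.2)]
  ring

theorem rank_le_of_hasPsdFact {p q k : ℕ} (M : Matrix (Fin p) (Fin q) ℝ)
    (hM : ∀ i j, 0 ≤ M i j) (h : HasPsdFact M k) :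
    M.rank ≤ k * (k + 1) / 2 := by
  classical
  obtain ⟨A, B, hA, hB, hAB⟩ := h
  set S := {x : Fin k × Fin k // x.1 ≤ x.2} with hS
  let N : Matrix (Fin p) S ℝ := fun i x => A i x.val.1 x.val.2
  let L : Matrix S (Fin q) ℝ :=
    fun x j => (if x.val.1 = x.val.2 then (1:ℝ) else 2) * B j x.val.1 x.val.2
  have hMNL : M = N * L := by
    ext i j
    rw [hAB i j, Matrix.mul_apply, Matrix.trace]
    simp only [Matrix.diag_apply, Matrix.mul_apply]
    have hsym : ∀ a b, A i a b * B j a b = A i b a * B j b a := by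
      intro a b
      have h1 : A i a b = A i b a := by
        have := (hA i).1; rw [Matrix.IsHermitian] at this
        conv_lhs => rw [← this]
        simp [Matrix.conjTranspose_apply]
      have h2 : B j a b = B j b a := by
        have := (hB j).1; rw [Matrix.IsHermitian] at this
        conv_lhs => rw [← this]
        simp [Matrix.conjTranspose_apply]
      rw [h1, h2]
    calc ∑ a, ∑ b, A i a b * B j b a
        = ∑ x : Fin k × Fin k, A i x.1 x.2 * B j x.1 x.2 := by
          rw [Fintype.sum_prod_type]
          refine Finset.sum_congr rfl fun a _ => Finset.sum_congr rfl fun b _ => ?_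
          congr 1
          have := (hB j).1; rw [Matrix.IsHermitian] at this
          conv_lhs => rw [← this]
          simp [Matrix.conjTranspose_apply]
      _ = ∑ x : S, (if x.val.1 = x.val.2 then (1:ℝ) else 2)
            * (A i x.val.1 x.val.2 * B j x.val.1 x.val.2) :=
          sum_symm_pairs _ hsym
      _ = ∑ x : S, N i x * L x j := by
          refine Finset.sum_congr rfl fun x _ => ?_
          simp only [N, L]; ring
  have hcard : Fintype.card S = k * (k + 1) / 2 := by
    have hc : Fintype.card S = Fintype.card (Sym2 (Fin k)) :=
      Fintype.card_congr (Sym2.sortEquiv (α := Fin k)).symm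
    rw [hc, Sym2.card, Fintype.card_fin, Nat.choose_two_right, Nat.add_sub_cancel,
      Nat.mul_comm]
  calc M.rank = (N * L).rank := by rw [hMNL]
    _ ≤ N.rank := Matrix.rank_mul_le_left N L
    _ ≤ Fintype.card S := Matrix.rank_le_card_width N
    _ = k * (k + 1) / 2 := hcard
end

section
/- The 3×3 matrix M with 0 on the diagonal and 1 in all off-diagonal entries admits a psd factorization of size 2, i.e., there exist 2×2 real symmetric psd matrices A_1,A_2,A_3,B_1,B_2,B_3 such that M_{ij} = trace(A_i B_j) for all i,j. -/
open Matrix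

lemma psd2 (a b : ℝ) : (!![a*a, a*b; a*b, b*b]).PosSemidef := by
  rw [Matrix.posSemidef_iff_dotProduct_mulVec]
  constructor
  · ext i j; fin_cases i <;> fin_cases j <;> simp [Matrix.IsHermitian, mul_comm]
  · intro x
    simp [dotProduct, Matrix.mulVec, Fin.sum_univ_two]
    nlinarith [sq_nonneg (a * x 0 + b * x 1)]

theorem derangement3_hasPsdFact_two :
    HasPsdFact (Matrix.of fun i j : Fin 3 => if i = j then (0 : ℝ) else 1) 2 := by
  refine ⟨![!![(1:ℝ)*1, 1*0; 1*0, 0*0], !![(0:ℝ)*0, 0*1; 0*1, 1*1], !![(1:ℝ)*1, 1*1; 1*1, 1*1]],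
    ![!![(0:ℝ)*0, 0*1; 0*1, 1*1], !![(1:ℝ)*1, 1*0; 1*0, 0*0], !![(1:ℝ)*1, 1*(-1); 1*(-1), (-1)*(-1)]],
    ?_, ?_, ?_⟩
  · intro i; fin_cases i <;> exact psd2 _ _
  · intro j; fin_cases j <;> exact psd2 _ _
  · intro i j
    fin_cases i <;> fin_cases j <;>
      simp [Matrix.trace, Matrix.mul_apply, Fin.sum_univ_two]
end

section
/- Every Hermitian psd factorization of size k of a nonnegative matrix M gives rise to a real psd factorization of size 2k; in particular, rank_psd(M) ≤ 2·rank_psd^ℂ(M). Concretely, if A is an n×n Hermitian positive semidefinite matrix, then the 2n×2n real symmetric block matrix (1/√2)·[[Re A, Im A],[−Im A, Re A]] is positive semidefinite, and the map A ↦ (1/√2)·[[Re A, Im A],[−Im A, Re A]] preserves trace inner products of Hermitian matrices. -/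
open Matrix
open scoped ComplexOrder

/-- The real symmetric block matrix associated to a complex matrix:
`(1/√2) • [[Re A, Im A], [-Im A, Re A]]`. -/
noncomputable def realify {n : ℕ} (A : Matrix (Fin n) (Fin n) ℂ) :
    Matrix (Fin n ⊕ Fin n) (Fin n ⊕ Fin n) ℝ :=
  (Real.sqrt 2)⁻¹ •
    Matrix.fromBlocks (A.map Complex.re) (A.map Complex.im)
      (-(A.map Complex.im)) (A.map Complex.re)

/-- The unscaled real representation of a complex matrix. -/
def auxPhi {n : ℕ} (A : Matrix (Fin n) (Fin n) ℂ) :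
    Matrix (Fin n ⊕ Fin n) (Fin n ⊕ Fin n) ℝ :=
  Matrix.fromBlocks (A.map Complex.re) (A.map Complex.im)
    (-(A.map Complex.im)) (A.map Complex.re)

lemma auxPhi_mul {n : ℕ} (C D : Matrix (Fin n) (Fin n) ℂ) :
    auxPhi (C * D) = auxPhi C * auxPhi D := by
  have hre : (C * D).map Complex.re =
      C.map Complex.re * D.map Complex.re + C.map Complex.im * (-(D.map Complex.im)) := by
    ext i j
    simp only [Matrix.map_apply, Matrix.add_apply, Matrix.mul_apply, Matrix.neg_apply,
      Complex.mul_re, mul_neg, Complex.re_sum, Finset.sum_sub_distrib, Finset.sum_neg_distrib]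
    ring
  have him : (C * D).map Complex.im =
      C.map Complex.re * D.map Complex.im + C.map Complex.im * D.map Complex.re := by
    ext i j
    simp only [Matrix.map_apply, Matrix.add_apply, Matrix.mul_apply, Complex.mul_im,
      Complex.im_sum, Finset.sum_add_distrib]
  simp only [auxPhi, Matrix.fromBlocks_multiply, hre, him]
  congr 1 <;> simp [Matrix.neg_mul, Matrix.mul_neg] <;> abel

lemma auxPhi_conjTranspose {n : ℕ} (C : Matrix (Fin n) (Fin n) ℂ) :
    auxPhi Cᴴ = (auxPhi C)ᵀ := by
  ext (i|j) (i'|j') <;>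
    simp [auxPhi, Matrix.conjTranspose_apply, Matrix.transpose_apply]

lemma auxPhi_posSemidef {n : ℕ} {C : Matrix (Fin n) (Fin n) ℂ} (hC : C.PosSemidef) :
    (auxPhi C).PosSemidef := by
  open scoped MatrixOrder in
  obtain ⟨B, rfl⟩ := CStarAlgebra.nonneg_iff_eq_star_mul_self.mp hC.nonneg
  rw [Matrix.star_eq_conjTranspose]
  rw [auxPhi_mul, auxPhi_conjTranspose]
  exact Matrix.posSemidef_conjTranspose_mul_self _

lemma realify_eq {n : ℕ} (C : Matrix (Fin n) (Fin n) ℂ) :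
    realify C = (Real.sqrt 2)⁻¹ • auxPhi C := rfl

lemma smul_posSemidef {m : Type*} [Fintype m] {c : ℝ} (hc : 0 ≤ c)
    {M : Matrix m m ℝ} (hM : M.PosSemidef) : (c • M).PosSemidef := by
  refine Matrix.PosSemidef.of_dotProduct_mulVec_nonneg ?_ (fun x => ?_)
  · unfold Matrix.IsHermitian at *
    rw [Matrix.conjTranspose_smul, hM.1]
    congr 1
  rw [Matrix.smul_mulVec, dotProduct_smul]
  exact mul_nonneg hc (hM.dotProduct_mulVec_nonneg x)

lemma trace_auxPhi {n : ℕ} (C : Matrix (Fin n) (Fin n) ℂ) :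
    (auxPhi C).trace = 2 * C.trace.re := by
  simp only [Matrix.trace, Matrix.diag, auxPhi, Fintype.sum_sum_type,
    Matrix.fromBlocks_apply₁₁, Matrix.fromBlocks_apply₂₂, Matrix.map_apply, Complex.re_sum]
  ring

lemma trace_realify_mul {n : ℕ} (C D : Matrix (Fin n) (Fin n) ℂ) :
    (realify C * realify D).trace = ((C * D).trace).re := by
  rw [realify_eq, realify_eq, smul_mul_smul_comm, Matrix.trace_smul, ← auxPhi_mul, trace_auxPhi]
  have h2 : (Real.sqrt 2)⁻¹ * (Real.sqrt 2)⁻¹ = 2⁻¹ := by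
    rw [← mul_inv, Real.mul_self_sqrt (by norm_num)]
  rw [h2, smul_eq_mul]
  ring

lemma trace_submatrix_equiv' {m l : Type*} [Fintype m] [Fintype l] (e : l ≃ m)
    (M : Matrix m m ℝ) : (M.submatrix e e).trace = M.trace := by
  simp only [Matrix.trace, Matrix.diag, Matrix.submatrix_apply]
  exact Equiv.sum_comp e fun i => M i i

theorem hermitian_fact_to_real_fact {p q k : ℕ} (M : Matrix (Fin p) (Fin q) ℝ)
    (hM : ∀ i j, 0 ≤ M i j)
    (A : Fin p → Matrix (Fin k) (Fin k) ℂ) (B : Fin q → Matrix (Fin k) (Fin k) ℂ)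
    (hA : ∀ i, (A i).PosSemidef) (hB : ∀ j, (B j).PosSemidef)
    (hfact : ∀ i j, (M i j : ℂ) = (A i * B j).trace) :
    HasPsdFact M (2 * k) ∧
    (∀ (n : ℕ) (C : Matrix (Fin n) (Fin n) ℂ), C.PosSemidef → (realify C).PosSemidef) ∧
    (∀ (n : ℕ) (C D : Matrix (Fin n) (Fin n) ℂ), C.IsHermitian → D.IsHermitian →
      (realify C * realify D).trace = ((C * D).trace).re) := by
  have hpsd : ∀ (n : ℕ) (C : Matrix (Fin n) (Fin n) ℂ), C.PosSemidef →
      (realify C).PosSemidef := by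
    intro n C hC
    rw [realify_eq]
    exact smul_posSemidef (by positivity) (auxPhi_posSemidef hC)
  refine ⟨?_, hpsd, fun n C D _ _ => trace_realify_mul C D⟩
  set e : Fin k ⊕ Fin k ≃ Fin (2 * k) := finSumFinEquiv.trans (finCongr (two_mul k).symm) with he
  refine ⟨fun i => (realify (A i)).submatrix e.symm e.symm,
    fun j => (realify (B j)).submatrix e.symm e.symm,
    fun i => (hpsd _ _ (hA i)).submatrix _, fun j => (hpsd _ _ (hB j)).submatrix _,
    fun i j => ?_⟩
  rw [Matrix.submatrix_mul_equiv, trace_submatrix_equiv', trace_realify_mul]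
  have := congrArg Complex.re (hfact i j)
  simpa using this
end

section
/- For nonnegative matrices M ∈ ℝ^{p×q} and N ∈ ℝ^{q×r}, rank_psd(MN) ≤ min(rank_psd(M), rank_psd(N)). -/
open Matrix

lemma psd_add {k : ℕ} {A B : Matrix (Fin k) (Fin k) ℝ} (hA : A.PosSemidef)
    (hB : B.PosSemidef) : (A + B).PosSemidef := by
  refine ⟨hA.1.add hB.1, fun x => ?_⟩
  simpa [mul_add, add_mul] using add_nonneg (hA.2 x) (hB.2 x)

lemma psd_smul {k : ℕ} {B : Matrix (Fin k) (Fin k) ℝ} (hB : B.PosSemidef)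
    {c : ℝ} (hc : 0 ≤ c) : (c • B).PosSemidef := by
  have hh : (c • B).IsHermitian := by
    show (c • B)ᴴ = c • B
    rw [conjTranspose_smul, star_trivial, hB.1.eq]
  refine ⟨hh, fun x => ?_⟩
  exact (hB.smul hc).2 x

lemma psd_weighted_sum {k q : ℕ} (B : Fin q → Matrix (Fin k) (Fin k) ℝ)
    (hB : ∀ j, (B j).PosSemidef) (c : Fin q → ℝ) (hc : ∀ j, 0 ≤ c j) :
    (∑ j, c j • B j).PosSemidef := by
  refine Finset.sum_induction _ _ (fun a b ha hb => psd_add ha hb) PosSemidef.zero ?_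
  exact fun j _ => psd_smul (hB j) (hc j)

lemma hasPsdFact_of_nonneg {p q : ℕ} (M : Matrix (Fin p) (Fin q) ℝ)
    (hM : ∀ i j, 0 ≤ M i j) : HasPsdFact M q := by
  refine ⟨fun i => diagonal (M i), fun j => diagonal (Pi.single j 1), fun i => .diagonal (hM i),
    fun j => .diagonal ?_, fun i j => ?_⟩
  · intro s
    simp only [Pi.single_apply]
    split <;> norm_num
  · rw [diagonal_mul_diagonal, trace_diagonal]
    simp [Pi.single_apply, mul_ite, Finset.sum_ite_eq']

lemma transfer_left {p q r k : ℕ} (M : Matrix (Fin p) (Fin q) ℝ)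
    (N : Matrix (Fin q) (Fin r) ℝ) (hN : ∀ i j, 0 ≤ N i j)
    (h : HasPsdFact M k) : HasPsdFact (M * N) k := by
  obtain ⟨A, B, hA, hB, hfact⟩ := h
  refine ⟨A, fun l => ∑ j, N j l • B j, hA, fun l => psd_weighted_sum B hB _ (fun j => hN j l),
    fun i l => ?_⟩
  rw [Matrix.mul_apply]
  simp only [Finset.mul_sum, Matrix.mul_smul, trace_sum, trace_smul, smul_eq_mul]
  exact Finset.sum_congr rfl fun j _ => by rw [hfact, mul_comm]

lemma transfer_right {p q r k : ℕ} (M : Matrix (Fin p) (Fin q) ℝ)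
    (N : Matrix (Fin q) (Fin r) ℝ) (hM : ∀ i j, 0 ≤ M i j)
    (h : HasPsdFact N k) : HasPsdFact (M * N) k := by
  obtain ⟨A, B, hA, hB, hfact⟩ := h
  refine ⟨fun i => ∑ j, M i j • A j, B, fun i => psd_weighted_sum A hA _ (fun j => hM i j), hB,
    fun i l => ?_⟩
  rw [Matrix.mul_apply]
  simp only [Finset.sum_mul, Matrix.smul_mul, trace_sum, trace_smul, smul_eq_mul]
  exact Finset.sum_congr rfl fun j _ => by rw [hfact]

theorem psdRank_mul_le {p q r : ℕ} (M : Matrix (Fin p) (Fin q) ℝ)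
    (N : Matrix (Fin q) (Fin r) ℝ)
    (hM : ∀ i j, 0 ≤ M i j) (hN : ∀ i j, 0 ≤ N i j) :
    psdRank (M * N) ≤ min (psdRank M) (psdRank N) := by
  have hMne : {k | HasPsdFact M k}.Nonempty := ⟨q, hasPsdFact_of_nonneg M hM⟩
  have hNne : {k | HasPsdFact N k}.Nonempty := ⟨r, hasPsdFact_of_nonneg N hN⟩
  refine le_min ?_ ?_
  · exact Nat.sInf_le (transfer_left M N hN (Nat.sInf_mem hMne))
  · exact Nat.sInf_le (transfer_right M N hM (Nat.sInf_mem hNne))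
end

section
/- For any matrix M ∈ ℝ^{p×q}, the Hadamard (entrywise) square M∘M (which is nonnegative) satisfies rank_psd(M∘M) ≤ rank(M). -/
open Matrix

lemma vecMulVec_posSemidef {k : ℕ} (w : Fin k → ℝ) : (vecMulVec w w).PosSemidef := by
  have h := Matrix.posSemidef_conjTranspose_mul_self (Matrix.replicateRow Unit w)
  have e : (Matrix.replicateRow Unit w)ᴴ * Matrix.replicateRow Unit w = vecMulVec w w := by
    ext a b
    simp [Matrix.mul_apply, Matrix.vecMulVec_apply, Matrix.replicateRow_apply,
      Matrix.conjTranspose_apply, mul_comm]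
  rwa [e] at h

lemma trace_vecMulVec_mul {k : ℕ} (a c : Fin k → ℝ) :
    (vecMulVec a a * vecMulVec c c).trace = (∑ t, a t * c t) ^ 2 := by
  rw [sq, Finset.sum_mul_sum]
  simp only [Matrix.trace, Matrix.diag, Matrix.mul_apply, Matrix.vecMulVec_apply]
  refine Finset.sum_congr rfl fun i _ => Finset.sum_congr rfl fun t _ => by ring

theorem psdRank_hadamard_sq_le_rank {p q : ℕ} (M : Matrix (Fin p) (Fin q) ℝ) :
    psdRank (Matrix.of fun i j => (M i j) ^ 2) ≤ M.rank := by
  apply Nat.sInf_le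
  set W := LinearMap.range M.mulVecLin with hW
  have hrank : Module.finrank ℝ W = M.rank := rfl
  let b : Module.Basis (Fin M.rank) ℝ W := (Module.finBasis ℝ W).reindex (finCongr hrank)
  have hcol : ∀ j, (fun i => M i j) ∈ W := fun j =>
    ⟨Pi.single j 1, by
      ext i
      simp [Matrix.mulVecLin_apply, Matrix.mulVec, dotProduct, Pi.single_apply]⟩
  let v : Fin q → Fin M.rank → ℝ := fun j t => b.repr ⟨_, hcol j⟩ t
  let u : Fin p → Fin M.rank → ℝ := fun i t => (b t : Fin p → ℝ) i
  have hM : ∀ i j, M i j = ∑ t, u i t * v j t := by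
    intro i j
    have h := b.sum_repr ⟨_, hcol j⟩
    have h2 := congrArg (fun (w : W) => (w : Fin p → ℝ) i) h
    simp only [AddSubmonoidClass.coe_finset_sum, Finset.sum_apply, SetLike.val_smul,
      Pi.smul_apply, smul_eq_mul] at h2
    rw [← h2]
    exact Finset.sum_congr rfl fun t _ => mul_comm _ _
  refine ⟨fun i => vecMulVec (u i) (u i), fun j => vecMulVec (v j) (v j),
    fun i => vecMulVec_posSemidef _, fun j => vecMulVec_posSemidef _, fun i j => ?_⟩
  rw [trace_vecMulVec_mul, Matrix.of_apply, hM i j]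
end

section
/- Let M be the block matrix [[P, 0],[Q, R]] where P ∈ ℝ^{p₁×q₁}, Q ∈ ℝ^{p₂×q₁}, R ∈ ℝ^{p₂×q₂} are nonnegative matrices. Then rank_psd(M) ≥ rank_psd(P) + rank_psd(R). -/
open Matrix

namespace PsdRankAux

variable {k : ℕ}

section SqrtShim
open scoped MatrixOrder

/-- Square root of a psd matrix (compatibility shim). -/
noncomputable def _root_.Matrix.PosSemidef.sqrt {X : Matrix (Fin k) (Fin k) ℝ}
    (_hX : X.PosSemidef) : Matrix (Fin k) (Fin k) ℝ := CFC.sqrt X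

lemma _root_.Matrix.PosSemidef.posSemidef_sqrt {X : Matrix (Fin k) (Fin k) ℝ}
    (hX : X.PosSemidef) : hX.sqrt.PosSemidef := (CFC.sqrt_nonneg X).posSemidef

lemma _root_.Matrix.PosSemidef.sqrt_mul_self {X : Matrix (Fin k) (Fin k) ℝ}
    (hX : X.PosSemidef) : hX.sqrt * hX.sqrt = X := CFC.sqrt_mul_sqrt_self X hX.nonneg

end SqrtShim

lemma frob_trace (M : Matrix (Fin k) (Fin k) ℝ) :
    (Mᴴ * M).trace = ∑ j, ∑ i, (M i j)^2 := by
  simp [Matrix.trace, Matrix.mul_apply, Matrix.diag, conjTranspose_apply, sq]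

lemma frob_nonneg (M : Matrix (Fin k) (Fin k) ℝ) : 0 ≤ (Mᴴ * M).trace := by
  rw [frob_trace]; positivity

lemma frob_eq_zero {M : Matrix (Fin k) (Fin k) ℝ} (h : (Mᴴ * M).trace = 0) : M = 0 := by
  rw [frob_trace] at h
  ext i j
  have h1 : ∀ j ∈ Finset.univ, (0:ℝ) ≤ ∑ i : Fin k, (M i j)^2 := fun _ _ => by positivity
  have h2 := (Finset.sum_eq_zero_iff_of_nonneg h1).1 h j (Finset.mem_univ j)
  have h3 : ∀ i ∈ Finset.univ, (0:ℝ) ≤ (M i j)^2 := fun _ _ => by positivity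
  have := (Finset.sum_eq_zero_iff_of_nonneg h3).1 h2 i (Finset.mem_univ i)
  simpa [sq] using pow_eq_zero_iff (n := 2) (by norm_num) |>.1 this

lemma trace_mul_psd_key {X Y : Matrix (Fin k) (Fin k) ℝ}
    (hX : X.PosSemidef) (hY : Y.PosSemidef) :
    (X * Y).trace = ((hX.sqrt * hY.sqrt)ᴴ * (hX.sqrt * hY.sqrt)).trace := by
  have hx : hX.sqrtᴴ = hX.sqrt := hX.posSemidef_sqrt.1
  have hy : hY.sqrtᴴ = hY.sqrt := hY.posSemidef_sqrt.1
  rw [conjTranspose_mul, hx, hy]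
  calc (X*Y).trace = ((hX.sqrt * (hX.sqrt * hY.sqrt)) * hY.sqrt).trace := by
        rw [mul_assoc, mul_assoc, ← mul_assoc hX.sqrt hX.sqrt, hX.sqrt_mul_self, hY.sqrt_mul_self]
    _ = (hY.sqrt * (hX.sqrt * (hX.sqrt * hY.sqrt))).trace := (Matrix.trace_mul_comm _ _).symm
    _ = (hY.sqrt * hX.sqrt * (hX.sqrt * hY.sqrt)).trace := by rw [mul_assoc]

lemma trace_mul_psd_nonneg {X Y : Matrix (Fin k) (Fin k) ℝ}
    (hX : X.PosSemidef) (hY : Y.PosSemidef) : 0 ≤ (X * Y).trace := by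
  rw [trace_mul_psd_key hX hY]; exact frob_nonneg _

lemma mul_eq_zero_of_trace_eq_zero {X Y : Matrix (Fin k) (Fin k) ℝ}
    (hX : X.PosSemidef) (hY : Y.PosSemidef) (h : (X * Y).trace = 0) : X * Y = 0 := by
  rw [trace_mul_psd_key hX hY] at h
  have h0 : hX.sqrt * hY.sqrt = 0 := frob_eq_zero h
  calc X * Y = hX.sqrt * (hX.sqrt * hY.sqrt) * hY.sqrt := by
        rw [← mul_assoc, hX.sqrt_mul_self, mul_assoc, hY.sqrt_mul_self]
    _ = 0 := by rw [h0, mul_zero, zero_mul]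

lemma posSemidef_sum {ι : Type*} (t : Finset ι) (f : ι → Matrix (Fin k) (Fin k) ℝ)
    (h : ∀ i ∈ t, (f i).PosSemidef) : (∑ i ∈ t, f i).PosSemidef := by
  classical
  induction t using Finset.induction_on with
  | empty => simp; exact ⟨Matrix.isHermitian_zero, fun x => by simp⟩
  | insert _ _ hnotmem ih =>
      rw [Finset.sum_insert hnotmem]
      have h1 := h _ (Finset.mem_insert_self _ _)
      have h2 := ih fun i hi => h i (Finset.mem_insert_of_mem hi)
      exact h1.add h2

lemma exists_isometry (s : Submodule ℝ (EuclideanSpace ℝ (Fin k))) :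
    ∃ U : Matrix (Fin k) (Fin (Module.finrank ℝ s)) ℝ,
      Uᴴ * U = 1 ∧ ∀ v : EuclideanSpace ℝ (Fin k), v ∈ s → (U * Uᴴ) *ᵥ (v : Fin k → ℝ) = v := by
  classical
  let b := stdOrthonormalBasis ℝ s
  refine ⟨Matrix.of (fun i a => ((b a : s) : EuclideanSpace ℝ (Fin k)) i), ?_, ?_⟩
  · ext a a'
    have := b.orthonormal
    rw [orthonormal_iff_ite] at this
    have h := this a a'
    rw [Submodule.coe_inner] at h
    simp only [PiLp.inner_apply, RCLike.inner_apply, starRingEnd_apply, star_trivial] at h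
    simp only [Matrix.mul_apply, Matrix.one_apply, conjTranspose_apply, Matrix.of_apply,
      star_trivial]
    rw [← h]
    exact Finset.sum_congr rfl fun _ _ => mul_comm _ _
  · intro v hv
    have hrepr := b.sum_repr' (⟨v, hv⟩ : s)
    have hco : ∑ a, (inner ℝ ((b a : s) : EuclideanSpace ℝ (Fin k)) v : ℝ) • ((b a : s) : EuclideanSpace ℝ (Fin k)) = v := by
      calc ∑ a, (inner ℝ ((b a : s) : EuclideanSpace ℝ (Fin k)) v : ℝ) • ((b a : s) : EuclideanSpace ℝ (Fin k))
          = ((∑ a, (inner ℝ (b a) (⟨v, hv⟩ : s) : ℝ) • b a : s) : EuclideanSpace ℝ (Fin k)) := by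
            push_cast [Submodule.coe_inner]
            rfl
        _ = v := by rw [hrepr]
    funext i
    simp only [mulVec, dotProduct, Matrix.mul_apply, conjTranspose_apply, Matrix.of_apply,
      star_trivial]
    conv_rhs => rw [← hco]
    rw [WithLp.ofLp_sum, Finset.sum_apply]
    simp only [WithLp.ofLp_smul, Pi.smul_apply, PiLp.smul_apply, smul_eq_mul, PiLp.inner_apply,
      RCLike.inner_apply, starRingEnd_apply, star_trivial]
    simp only [Finset.sum_mul, Finset.mul_sum]
    rw [Finset.sum_comm]
    exact Finset.sum_congr rfl fun a _ => Finset.sum_congr rfl fun x _ => by ring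

/-- The linear map on Euclidean space given by `mulVec`. -/
def mlin (X : Matrix (Fin k) (Fin k) ℝ) :
    EuclideanSpace ℝ (Fin k) →ₗ[ℝ] EuclideanSpace ℝ (Fin k) where
  toFun v := WithLp.toLp 2 (X *ᵥ (v : Fin k → ℝ))
  map_add' a b := by simp [Matrix.mulVec_add]
  map_smul' c a := by simp [Matrix.mulVec_smul]

lemma mem_ker_mlin_iff {X : Matrix (Fin k) (Fin k) ℝ} {v : EuclideanSpace ℝ (Fin k)} :
    v ∈ LinearMap.ker (mlin X) ↔ X *ᵥ (v : Fin k → ℝ) = 0 := by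
  rw [LinearMap.mem_ker]; exact WithLp.toLp_eq_zero 2

lemma inner_eq_dot (u v : EuclideanSpace ℝ (Fin k)) :
    (inner ℝ u v : ℝ) = (u : Fin k → ℝ) ⬝ᵥ (v : Fin k → ℝ) := by
  simp [PiLp.inner_apply, RCLike.inner_apply, starRingEnd_apply, dotProduct]
  exact Finset.sum_congr rfl fun _ _ => mul_comm _ _

lemma proj_fix {d : ℕ} {U : Matrix (Fin k) (Fin d) ℝ} {s : Submodule ℝ (EuclideanSpace ℝ (Fin k))}
    (hU : ∀ v : EuclideanSpace ℝ (Fin k), v ∈ s → (U * Uᴴ) *ᵥ (v : Fin k → ℝ) = v)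
    {A : Matrix (Fin k) (Fin k) ℝ} (hA : Aᴴ = A)
    (hcol : ∀ c, (WithLp.toLp 2 (fun r => A r c : Fin k → ℝ) : EuclideanSpace ℝ (Fin k)) ∈ s) :
    (U * Uᴴ) * A * (U * Uᴴ) = A := by
  have hPA : (U * Uᴴ) * A = A := by
    ext r c
    have := congrFun (hU _ (hcol c)) r
    simpa [Matrix.mul_apply, Matrix.mulVec, dotProduct] using this
  have hPh : (U * Uᴴ)ᴴ = U * Uᴴ := by rw [conjTranspose_mul, conjTranspose_conjTranspose]
  have hAP : A * (U * Uᴴ) = A := by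
    have h := congrArg Matrix.conjTranspose hPA
    rwa [conjTranspose_mul, hA, hPh] at h
  rw [hPA, hAP]

lemma trace_compress {d : ℕ} (U : Matrix (Fin k) (Fin d) ℝ) (A B : Matrix (Fin k) (Fin k) ℝ)
    (hA : (U * Uᴴ) * A * (U * Uᴴ) = A) :
    ((Uᴴ * A * U) * (Uᴴ * B * U)).trace = (A * B).trace := by
  have e1 : (Uᴴ * A * U) * (Uᴴ * B * U) = Uᴴ * (A * (U * Uᴴ) * B) * U := by
    simp only [Matrix.mul_assoc]
  have e2 : (U * Uᴴ) * (A * (U * Uᴴ) * B) = ((U * Uᴴ) * A * (U * Uᴴ)) * B := by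
    simp only [Matrix.mul_assoc]
  rw [e1, Matrix.trace_mul_cycle Uᴴ (A * (U * Uᴴ) * B) U, e2, hA]

end PsdRankAux

namespace PsdRankAux2
open PsdRankAux

variable {k : ℕ}

lemma sum_mulVec' {ι : Type*} (t : Finset ι) (f : ι → Matrix (Fin k) (Fin k) ℝ) (v : Fin k → ℝ) :
    (∑ i ∈ t, f i) *ᵥ v = ∑ i ∈ t, f i *ᵥ v := by
  classical
  induction t using Finset.induction_on with
  | empty => simp
  | insert _ _ hnotmem ih =>
      rw [Finset.sum_insert hnotmem, Finset.sum_insert hnotmem, Matrix.add_mulVec, ih]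

lemma dotProduct_sum' {ι : Type*} (t : Finset ι) (v : Fin k → ℝ) (f : ι → (Fin k → ℝ)) :
    v ⬝ᵥ (∑ i ∈ t, f i) = ∑ i ∈ t, v ⬝ᵥ f i := by
  simp only [dotProduct, Finset.sum_apply, Finset.mul_sum]
  exact Finset.sum_comm

lemma hasPsdFact_compress_left {m' n' : Type*} {N : Matrix m' n' ℝ}
    {A : m' → Matrix (Fin k) (Fin k) ℝ} {B : n' → Matrix (Fin k) (Fin k) ℝ}
    (hfac : IsPsdFact N A B) (s : Submodule ℝ (EuclideanSpace ℝ (Fin k)))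
    (hcol : ∀ i c, (WithLp.toLp 2 (fun r => A i r c : Fin k → ℝ) : EuclideanSpace ℝ (Fin k)) ∈ s) :
    HasPsdFact N (Module.finrank ℝ s) := by
  obtain ⟨U, hU1, hU2⟩ := exists_isometry s
  obtain ⟨hA, hB, htr⟩ := hfac
  refine ⟨fun i => Uᴴ * A i * U, fun j => Uᴴ * B j * U,
    fun i => (hA i).conjTranspose_mul_mul_same U,
    fun j => (hB j).conjTranspose_mul_mul_same U, fun i j => ?_⟩
  rw [htr i j, trace_compress U _ _ (proj_fix hU2 (hA i).1 (hcol i))]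

lemma hasPsdFact_transpose {m' n' : Type*} {N : Matrix m' n' ℝ} {d : ℕ}
    (h : HasPsdFact N d) : HasPsdFact Nᵀ d := by
  obtain ⟨A, B, hA, hB, htr⟩ := h
  exact ⟨B, A, hB, hA, fun j i => by rw [transpose_apply, htr i j, Matrix.trace_mul_comm]⟩

lemma conjTranspose_eq_transpose' (A : Matrix (Fin k) (Fin k) ℝ) : Aᴴ = Aᵀ := by
  ext a b; simp [conjTranspose_apply]

lemma key {p₁ p₂ q₁ q₂ k : ℕ} {P : Matrix (Fin p₁) (Fin q₁) ℝ} {Q : Matrix (Fin p₂) (Fin q₁) ℝ}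
    {R : Matrix (Fin p₂) (Fin q₂) ℝ}
    (hfac : HasPsdFact (Matrix.fromBlocks P 0 Q R) k) :
    ∃ d₁ d₂ : ℕ, d₁ + d₂ ≤ k ∧ HasPsdFact P d₁ ∧ HasPsdFact R d₂ := by
  classical
  obtain ⟨A, B, hA, hB, htr⟩ := hfac
  set X : Matrix (Fin k) (Fin k) ℝ := ∑ i, A (Sum.inl i) with hXdef
  set Y : Matrix (Fin k) (Fin k) ℝ := ∑ j, B (Sum.inr j) with hYdef
  have hX : X.PosSemidef := posSemidef_sum _ _ fun i _ => hA _
  have hY : Y.PosSemidef := posSemidef_sum _ _ fun j _ => hB _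
  have htrXY : (X * Y).trace = 0 := by
    rw [hXdef, hYdef, Finset.sum_mul_sum, Matrix.trace_sum]
    refine Finset.sum_eq_zero fun i _ => ?_
    rw [Matrix.trace_sum]
    refine Finset.sum_eq_zero fun j _ => ?_
    rw [← htr (Sum.inl i) (Sum.inr j)]
    simp
  have hXY : X * Y = 0 := mul_eq_zero_of_trace_eq_zero hX hY htrXY
  -- kernel inclusions
  have hkerX : ∀ v : Fin k → ℝ, X *ᵥ v = 0 → ∀ i, A (Sum.inl i) *ᵥ v = 0 := by
    intro v hv i
    have hsum : ∑ i, v ⬝ᵥ (A (Sum.inl i) *ᵥ v) = 0 := by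
      have h0 : v ⬝ᵥ (X *ᵥ v) = 0 := by rw [hv, dotProduct_zero]
      rw [← h0, hXdef, sum_mulVec', dotProduct_sum']
    have hnn : ∀ i ∈ Finset.univ, (0:ℝ) ≤ v ⬝ᵥ (A (Sum.inl i) *ᵥ v) := fun i _ => by
      simpa using (hA (Sum.inl i)).dotProduct_mulVec_nonneg v
    have h1 := (Finset.sum_eq_zero_iff_of_nonneg hnn).1 hsum i (Finset.mem_univ i)
    exact ((hA (Sum.inl i)).dotProduct_mulVec_zero_iff v).1 (by simpa using h1)
  have hkerY : ∀ v : Fin k → ℝ, Y *ᵥ v = 0 → ∀ j, B (Sum.inr j) *ᵥ v = 0 := by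
    intro v hv j
    have hsum : ∑ j, v ⬝ᵥ (B (Sum.inr j) *ᵥ v) = 0 := by
      have h0 : v ⬝ᵥ (Y *ᵥ v) = 0 := by rw [hv, dotProduct_zero]
      rw [← h0, hYdef, sum_mulVec', dotProduct_sum']
    have hnn : ∀ j ∈ Finset.univ, (0:ℝ) ≤ v ⬝ᵥ (B (Sum.inr j) *ᵥ v) := fun j _ => by
      simpa using (hB (Sum.inr j)).dotProduct_mulVec_nonneg v
    have h1 := (Finset.sum_eq_zero_iff_of_nonneg hnn).1 hsum j (Finset.mem_univ j)
    exact ((hB (Sum.inr j)).dotProduct_mulVec_zero_iff v).1 (by simpa using h1)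
  set s₁ : Submodule ℝ (EuclideanSpace ℝ (Fin k)) := (LinearMap.ker (mlin X))ᗮ with hs₁
  set s₂ : Submodule ℝ (EuclideanSpace ℝ (Fin k)) := (LinearMap.ker (mlin Y))ᗮ with hs₂
  -- column membership
  have colmem : ∀ (Z C : Matrix (Fin k) (Fin k) ℝ), Cᴴ = C →
      (∀ v : Fin k → ℝ, Z *ᵥ v = 0 → C *ᵥ v = 0) →
      ∀ c, (show EuclideanSpace ℝ (Fin k) from WithLp.toLp 2 fun r => C r c) ∈
        ((LinearMap.ker (mlin Z))ᗮ : Submodule ℝ (EuclideanSpace ℝ (Fin k))) := by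
    intro Z C hC hker c
    rw [Submodule.mem_orthogonal]
    intro u hu
    rw [inner_eq_dot, dotProduct_comm]
    have hCu : C *ᵥ (u : Fin k → ℝ) = 0 := hker _ (mem_ker_mlin_iff.1 hu)
    have hCt : Cᵀ = C := by rw [← conjTranspose_eq_transpose', hC]
    have heq : (fun r => C r c : Fin k → ℝ) ⬝ᵥ (u : Fin k → ℝ) = (Cᵀ *ᵥ (u : Fin k → ℝ)) c := rfl
    rw [heq, hCt, hCu]
    rfl
  have hcol₁ := fun i => colmem X (A (Sum.inl i)) (hA _).1 (fun v hv => hkerX v hv i)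
  have hcol₂ := fun j => colmem Y (B (Sum.inr j)) (hB _).1 (fun v hv => hkerY v hv j)
  have hfacP : HasPsdFact P (Module.finrank ℝ s₁) := by
    refine hasPsdFact_compress_left
      (A := fun i => A (Sum.inl i)) (B := fun j => B (Sum.inl j))
      ⟨fun i => hA _, fun j => hB _, fun i j => ?_⟩ s₁ hcol₁
    have := htr (Sum.inl i) (Sum.inl j)
    simpa using this
  have hfacR : HasPsdFact R (Module.finrank ℝ s₂) := by
    have h1 : HasPsdFact Rᵀ (Module.finrank ℝ s₂) := by
      refine hasPsdFact_compress_left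
        (A := fun j => B (Sum.inr j)) (B := fun i => A (Sum.inr i))
        ⟨fun j => hB _, fun i => hA _, fun j i => ?_⟩ s₂ hcol₂
      have := htr (Sum.inr i) (Sum.inr j)
      simp only [Matrix.fromBlocks_apply₂₂] at this
      rw [transpose_apply, this, Matrix.trace_mul_comm]
    simpa using hasPsdFact_transpose h1
  refine ⟨_, _, ?_, hfacP, hfacR⟩
  -- dimension count
  have hle : s₂ ≤ s₁ᗮ := by
    rw [hs₁, Submodule.orthogonal_orthogonal]
    have hrange_le : LinearMap.range (mlin Y) ≤ LinearMap.ker (mlin X) := by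
      rintro _ ⟨v, rfl⟩
      rw [mem_ker_mlin_iff]
      show X *ᵥ (Y *ᵥ (v : Fin k → ℝ)) = 0
      rw [Matrix.mulVec_mulVec, hXY, Matrix.zero_mulVec]
    have hYt : Yᵀ = Y := by rw [← conjTranspose_eq_transpose', hY.1]
    have hr : LinearMap.range (mlin Y) = (LinearMap.ker (mlin Y))ᗮ := by
      apply Submodule.eq_of_le_of_finrank_eq
      · rintro _ ⟨v, rfl⟩
        rw [Submodule.mem_orthogonal]
        intro u hu
        rw [inner_eq_dot]
        show (u : Fin k → ℝ) ⬝ᵥ (Y *ᵥ (v : Fin k → ℝ)) = 0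
        rw [dotProduct_mulVec, ← Matrix.mulVec_transpose, hYt,
          (mem_ker_mlin_iff).1 hu, zero_dotProduct]
      · have h1 := LinearMap.finrank_range_add_finrank_ker (mlin Y)
        have h2 := Submodule.finrank_add_finrank_orthogonal (LinearMap.ker (mlin Y))
        rw [finrank_euclideanSpace_fin] at h1 h2
        omega
    rw [hs₂, ← hr]
    exact hrange_le
  have h3 := Submodule.finrank_add_finrank_orthogonal s₁
  have h4 := Submodule.finrank_mono hle
  rw [finrank_euclideanSpace_fin] at h3
  omega

lemma hasPsdFact_of_nonneg {m' n' : Type*} [Fintype m'] [Fintype n'] [DecidableEq n']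
    (M : Matrix m' n' ℝ) (h : ∀ i j, 0 ≤ M i j) : HasPsdFact M (Fintype.card n') := by
  classical
  let e := Fintype.equivFin n'
  refine ⟨fun i => Matrix.diagonal (fun a => M i (e.symm a)),
          fun j => Matrix.diagonal (Pi.single (e j) 1),
          fun i => Matrix.PosSemidef.diagonal (fun a => h i _),
          fun j => Matrix.PosSemidef.diagonal ?_, fun i j => ?_⟩
  · intro a
    classical
    rw [Pi.single_apply]
    split <;> norm_num
  · rw [Matrix.diagonal_mul_diagonal, Matrix.trace_diagonal]
    simp [Pi.single_apply, mul_ite]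

end PsdRankAux2

theorem psdRank_blockTriangular {p₁ p₂ q₁ q₂ : ℕ}
    (P : Matrix (Fin p₁) (Fin q₁) ℝ) (Q : Matrix (Fin p₂) (Fin q₁) ℝ)
    (R : Matrix (Fin p₂) (Fin q₂) ℝ)
    (hP : ∀ i j, 0 ≤ P i j) (hQ : ∀ i j, 0 ≤ Q i j) (hR : ∀ i j, 0 ≤ R i j) :
    psdRank P + psdRank R ≤ psdRank (Matrix.fromBlocks P 0 Q R) := by
  classical
  have hMnn : ∀ i j, 0 ≤ (Matrix.fromBlocks P 0 Q R) i j := by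
    rintro (i | i) (j | j)
    · simpa using hP i j
    · simp
    · simpa using hQ i j
    · simpa using hR i j
  have hne : {k | HasPsdFact (Matrix.fromBlocks P 0 Q R) k}.Nonempty :=
    ⟨_, PsdRankAux2.hasPsdFact_of_nonneg _ hMnn⟩
  have hmem : HasPsdFact (Matrix.fromBlocks P 0 Q R) (psdRank (Matrix.fromBlocks P 0 Q R)) :=
    Nat.sInf_mem hne
  obtain ⟨d₁, d₂, hdle, h1, h2⟩ := PsdRankAux2.key hmem
  have hp : psdRank P ≤ d₁ := Nat.sInf_le h1
  have hr : psdRank R ≤ d₂ := Nat.sInf_le h2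
  omega
end

section
/- The psd rank of the n×n identity matrix equals n. More generally, the psd rank of a nonnegative diagonal matrix equals the number of its nonzero diagonal entries. -/
open Matrix

lemma trace_conjT_mul_self_eq_zero {k : ℕ} {M : Matrix (Fin k) (Fin k) ℝ}
    (h : (Mᴴ * M).trace = 0) : M = 0 := by
  have h' : ∑ j, ∑ i, M i j * M i j = 0 := by
    simpa [Matrix.trace, Matrix.mul_apply, Matrix.diag] using h
  ext i j
  have h1 := (Finset.sum_eq_zero_iff_of_nonneg (fun j _ =>
    Finset.sum_nonneg fun i _ => mul_self_nonneg (M i j))).mp h' j (Finset.mem_univ j)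
  have h2 := (Finset.sum_eq_zero_iff_of_nonneg (fun i _ => mul_self_nonneg (M i j))).mp
    h1 i (Finset.mem_univ i)
  simpa using mul_self_eq_zero.mp h2

/-- For real psd matrices, `trace (A * B) = 0` forces `A * B = 0`. -/
lemma psd_mul_eq_zero {k : ℕ} {A B : Matrix (Fin k) (Fin k) ℝ}
    (hA : A.PosSemidef) (hB : B.PosSemidef) (h : (A * B).trace = 0) : A * B = 0 := by
  obtain ⟨C, rfl⟩ : ∃ C : Matrix (Fin k) (Fin k) ℝ, A = Cᴴ * C := by
    classical
    open scoped MatrixOrder in exact CStarAlgebra.nonneg_iff_eq_star_mul_self.mp hA.nonneg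
  obtain ⟨D, rfl⟩ : ∃ D : Matrix (Fin k) (Fin k) ℝ, B = Dᴴ * D := by
    classical
    open scoped MatrixOrder in exact CStarAlgebra.nonneg_iff_eq_star_mul_self.mp hB.nonneg
  have key : C * Dᴴ = 0 := by
    apply trace_conjT_mul_self_eq_zero
    rw [conjTranspose_mul, conjTranspose_conjTranspose, trace_mul_comm,
      show C * Dᴴ * (D * Cᴴ) = (C * (Dᴴ * D)) * Cᴴ by simp only [← mul_assoc],
      trace_mul_comm, show Cᴴ * (C * (Dᴴ * D)) = Cᴴ * C * (Dᴴ * D) by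
        simp only [← mul_assoc], h]
  rw [show Cᴴ * C * (Dᴴ * D) = Cᴴ * (C * Dᴴ) * D by simp only [← mul_assoc], key]
  simp

/-- Upper bound: explicit psd factorization of a nonnegative diagonal matrix. -/
lemma diag_hasPsdFact {n : ℕ} (d : Fin n → ℝ) (hd : ∀ i, 0 ≤ d i) :
    HasPsdFact (Matrix.diagonal d) ((Finset.univ.filter fun i => d i ≠ 0).card) := by
  classical
  set r := (Finset.univ.filter fun i => d i ≠ 0).card with hr
  have hcard : Fintype.card {i // d i ≠ 0} = r := by
    rw [Fintype.card_subtype]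
  let e : {i // d i ≠ 0} ≃ Fin r := Fintype.equivFinOfCardEq hcard
  let g : Fin r → Fin n := fun t => (e.symm t).1
  have hginj : Function.Injective g := fun t t' h =>
    e.symm.injective (Subtype.ext h)
  refine ⟨fun i => Matrix.diagonal (fun t => if g t = i then d i else 0),
    fun j => Matrix.diagonal (fun t => if g t = j then 1 else 0), ?_, ?_, ?_⟩
  · intro i
    refine Matrix.posSemidef_diagonal_iff.mpr fun t => ?_
    split <;> simp [hd i]
  · intro j
    refine Matrix.posSemidef_diagonal_iff.mpr fun t => ?_
    split <;> norm_num
  · intro i j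
    rw [Matrix.diagonal_mul_diagonal, Matrix.trace_diagonal]
    rcases eq_or_ne i j with rfl | hij
    · rcases eq_or_ne (d i) 0 with h0 | h0
      · simp [Matrix.diagonal_apply_eq, h0]
      · have ht0 : g (e ⟨i, h0⟩) = i := by simp [g]
        rw [Finset.sum_eq_single (e ⟨i, h0⟩)]
        · simp [ht0, Matrix.diagonal_apply_eq]
        · intro t _ htne
          have : g t ≠ i := fun hgt => htne (hginj (by rw [hgt, ht0]))
          simp [this]
        · simp
    · rw [Matrix.diagonal_apply_ne _ hij]
      refine (Finset.sum_eq_zero fun t _ => ?_).symm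
      rcases eq_or_ne (g t) i with hti | hti
      · have : g t ≠ j := by rw [hti]; exact hij
        simp [this]
      · simp [hti]

lemma exists_mulVec_ne_zero {k : ℕ} {M : Matrix (Fin k) (Fin k) ℝ} (h : M ≠ 0) :
    ∃ w, M.mulVec w ≠ 0 := by
  by_contra hc
  push_neg at hc
  apply h
  ext i j
  have := congrFun (hc (Pi.single j 1)) i
  simpa [Matrix.mulVec_single] using this

/-- Lower bound: any psd factorization of a diagonal matrix has size at least the
number of nonzero diagonal entries. -/
lemma diag_lower {n k : ℕ} (d : Fin n → ℝ) (h : HasPsdFact (Matrix.diagonal d) k) :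
    (Finset.univ.filter fun i => d i ≠ 0).card ≤ k := by
  classical
  obtain ⟨A, B, hA, hB, hM⟩ := h
  have hzero : ∀ i j : Fin n, i ≠ j → A i * B j = 0 := fun i j hij =>
    psd_mul_eq_zero (hA i) (hB j) (by rw [← hM, Matrix.diagonal_apply_ne _ hij])
  have hne : ∀ s : {i // d i ≠ 0}, ∃ w, (A s.1 * B s.1).mulVec w ≠ 0 := by
    intro s
    apply exists_mulVec_ne_zero
    intro h0
    apply s.2
    rw [← Matrix.diagonal_apply_eq d s.1, hM, h0, Matrix.trace_zero]
  choose w hw using hne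
  set v : {i // d i ≠ 0} → (Fin k → ℝ) := fun s => (B s.1).mulVec (w s) with hv
  have hli : LinearIndependent ℝ v := by
    rw [Fintype.linearIndependent_iff]
    intro c hc m
    have key : (A m.1).mulVec (∑ s, c s • v s) = c m • (A m.1 * B m.1).mulVec (w m) := by
      rw [← Matrix.mulVecLin_apply, map_sum]
      rw [Finset.sum_eq_single m]
      · simp [hv, Matrix.mulVecLin_apply, Matrix.mulVec_smul, Matrix.mulVec_mulVec]
      · intro s _ hsm
        have hsm' : (m : Fin n) ≠ s.1 := fun hh => hsm (Subtype.ext hh.symm)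
        simp [hv, Matrix.mulVecLin_apply, Matrix.mulVec_smul, Matrix.mulVec_mulVec,
          hzero _ _ hsm']
      · simp
    rw [hc, Matrix.mulVec_zero] at key
    rcases smul_eq_zero.mp key.symm with h | h
    · exact h
    · exact absurd h (hw m)
  have hcard := hli.fintype_card_le_finrank
  rwa [Module.finrank_fin_fun, Fintype.card_subtype] at hcard

lemma psdRank_diagonal' {n : ℕ} (d : Fin n → ℝ) (hd : ∀ i, 0 ≤ d i) :
    psdRank (Matrix.diagonal d) = (Finset.univ.filter fun i => d i ≠ 0).card := by
  refine le_antisymm (Nat.sInf_le (diag_hasPsdFact d hd)) ?_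
  exact le_csInf ⟨_, diag_hasPsdFact d hd⟩ fun k hk => diag_lower d hk

theorem psdRank_identity_and_diagonal (n : ℕ) :
    psdRank (1 : Matrix (Fin n) (Fin n) ℝ) = n ∧
    ∀ d : Fin n → ℝ, (∀ i, 0 ≤ d i) →
      psdRank (Matrix.diagonal d) = (Finset.univ.filter fun i => d i ≠ 0).card := by
  refine ⟨?_, fun d hd => psdRank_diagonal' d hd⟩
  have := psdRank_diagonal' (fun _ : Fin n => (1 : ℝ)) (fun _ => zero_le_one)
  rw [Matrix.diagonal_one] at this
  rw [this]
  simp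
end

section
/- If a nonnegative matrix M ∈ ℝ^{p×q} admits a psd factorization of size k, then it admits a psd factorization M_{ij} = trace(A_i B_j) of size k in which trace(A_i) ≤ k for all i and trace(B_j) = Σ_{i=1}^p M_{ij} for all j. (One may assume WLOG that Σ_i A_i is invertible, or prove the statement under that assumption.) -/
open Matrix

lemma psd_exists_conjTranspose_mul_self {k : ℕ} {A : Matrix (Fin k) (Fin k) ℝ}
    (hA : A.PosSemidef) : ∃ (m : ℕ) (C : Matrix (Fin m) (Fin k) ℝ), A = Cᴴ * C := by
  obtain ⟨m, v, hv⟩ := Matrix.posSemidef_iff_eq_sum_vecMulVec.mp hA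
  refine ⟨m, Matrix.of fun i l => v i l, ?_⟩
  rw [hv]; ext a b
  simp [Matrix.mul_apply, Matrix.sum_apply, Matrix.vecMulVec_apply]

lemma psd_diag_nonneg {k : ℕ} {A : Matrix (Fin k) (Fin k) ℝ} (hA : A.PosSemidef) (l : Fin k) :
    0 ≤ A l l := by
  obtain ⟨_, C, rfl⟩ := psd_exists_conjTranspose_mul_self hA
  simp only [Matrix.mul_apply, Matrix.conjTranspose_apply, star_trivial]
  exact Finset.sum_nonneg fun s _ => mul_self_nonneg _

lemma psd_row_col_zero {k : ℕ} {A : Matrix (Fin k) (Fin k) ℝ} (hA : A.PosSemidef) (l : Fin k)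
    (h0 : A l l = 0) (m : Fin k) : A l m = 0 ∧ A m l = 0 := by
  obtain ⟨_, C, rfl⟩ := psd_exists_conjTranspose_mul_self hA
  simp only [Matrix.mul_apply, Matrix.conjTranspose_apply, star_trivial] at *
  have hC : ∀ s, C s l = 0 := by
    intro s
    have := (Finset.sum_eq_zero_iff_of_nonneg (fun s _ => mul_self_nonneg (C s l))).mp h0 s
      (Finset.mem_univ s)
    exact mul_self_eq_zero.mp this
  constructor <;> apply Finset.sum_eq_zero <;> intro s _ <;> simp [hC s]

lemma psd_trace_nonneg {k : ℕ} {A : Matrix (Fin k) (Fin k) ℝ} (hA : A.PosSemidef) :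
    0 ≤ A.trace :=
  Finset.sum_nonneg fun l _ => psd_diag_nonneg hA l

theorem psdFact_rescaled' {p q k : ℕ} (M : Matrix (Fin p) (Fin q) ℝ)
    (A : Fin p → Matrix (Fin k) (Fin k) ℝ) (B : Fin q → Matrix (Fin k) (Fin k) ℝ)
    (hA : ∀ i, (A i).PosSemidef) (hB : ∀ j, (B j).PosSemidef)
    (hAB : ∀ i j, M i j = (A i * B j).trace) :
    ∃ (A' : Fin p → Matrix (Fin k) (Fin k) ℝ) (B' : Fin q → Matrix (Fin k) (Fin k) ℝ),
      IsPsdFact M A' B' ∧ (∀ i, (A' i).trace ≤ k) ∧ ∀ j, (B' j).trace = ∑ i, M i j := by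
  set S : Matrix (Fin k) (Fin k) ℝ := ∑ i, A i with hSdef
  have hS : S.PosSemidef := by
    apply Finset.sum_induction _ _ (fun a b ha hb => ha.add hb)
    · exact Matrix.PosSemidef.zero
    · exact fun i _ => hA i
  have hH := hS.1
  set V : Matrix (Fin k) (Fin k) ℝ := (hH.eigenvectorUnitary : Matrix (Fin k) (Fin k) ℝ) with hVdef
  set μ : Fin k → ℝ := hH.eigenvalues with hμdef
  have hμ0 : ∀ l, 0 ≤ μ l := fun l => hS.eigenvalues_nonneg l
  have spec : S = V * diagonal μ * star V := by
    have := hH.spectral_theorem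
    rwa [RCLike.ofReal_real_eq_id, Function.id_comp] at this
  have hU1 : V * star V = 1 := (Matrix.mem_unitaryGroup_iff).mp hH.eigenvectorUnitary.2
  have hU2 : star V * V = 1 := (Matrix.mem_unitaryGroup_iff').mp hH.eigenvectorUnitary.2
  -- scalar functions
  set e : Fin k → ℝ := fun l => if μ l = 0 then 0 else (Real.sqrt (μ l))⁻¹ with hedef
  set f : Fin k → ℝ := fun l => Real.sqrt (μ l) with hfdef
  set P : Fin k → ℝ := fun l => if μ l = 0 then 0 else 1 with hPdef
  have hsqrt_ne : ∀ l, μ l ≠ 0 → Real.sqrt (μ l) ≠ 0 := fun l hl =>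
    Real.sqrt_ne_zero'.mpr (lt_of_le_of_ne (hμ0 l) (Ne.symm hl))
  have hef : ∀ l, e l * f l = P l := by
    intro l
    by_cases hl : μ l = 0
    · simp [hedef, hfdef, hPdef, hl]
    · simp [hedef, hfdef, hPdef, hl, inv_mul_cancel₀ (hsqrt_ne l hl)]
  have hfe : ∀ l, f l * e l = P l := by
    intro l; rw [mul_comm]; exact hef l
  have hff : ∀ l, f l * f l = μ l := fun l => Real.mul_self_sqrt (hμ0 l)
  have heμe : ∀ l, e l * μ l * e l = P l := by
    intro l
    by_cases hl : μ l = 0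
    · simp [hedef, hPdef, hl]
    · have h1 : Real.sqrt (μ l) * Real.sqrt (μ l) = μ l := hff l
      have h2 : Real.sqrt (μ l) ≠ 0 := hsqrt_ne l hl
      simp only [hedef, hPdef, hl, if_false]
      field_simp
      rw [Real.sq_sqrt (hμ0 l)]
  -- conjugated matrices
  set At : Fin p → Matrix (Fin k) (Fin k) ℝ := fun i => star V * A i * V with hAtdef
  set Bt : Fin q → Matrix (Fin k) (Fin k) ℝ := fun j => star V * B j * V with hBtdef
  have hAtpsd : ∀ i, (At i).PosSemidef := by
    intro i
    have := (hA i).conjTranspose_mul_mul_same V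
    exact this
  have hBtpsd : ∀ j, (Bt j).PosSemidef := by
    intro j
    have := (hB j).conjTranspose_mul_mul_same V
    exact this
  have hsumAt : ∑ i, At i = diagonal μ := by
    have : ∑ i, At i = star V * S * V := by
      simp [hAtdef, hSdef, Finset.mul_sum, Finset.sum_mul]
    rw [this, spec]
    rw [show star V * (V * diagonal μ * star V) * V
        = (star V * V) * diagonal μ * (star V * V) by noncomm_ring]
    rw [hU2, one_mul, mul_one]
  -- trace of At * Bt equals M
  have htr : ∀ i j, ((At i) * (Bt j)).trace = M i j := by
    intro i j
    have : (At i) * (Bt j) = star V * (A i * B j) * V := by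
      rw [hAtdef, hBtdef]
      rw [show star V * A i * V * (star V * B j * V)
          = star V * A i * (V * star V) * B j * V by noncomm_ring]
      rw [hU1]; noncomm_ring
    rw [this, Matrix.trace_mul_comm, show V * (star V * (A i * B j)) = (V * star V) * (A i * B j)
      by noncomm_ring, hU1, one_mul, hAB i j]
  -- kernel rows/columns of At vanish
  have hAtzero : ∀ i l, μ l = 0 → (∀ m, At i l m = 0 ∧ At i m l = 0) := by
    intro i l hl
    have hdiag : ∀ i' : Fin p, 0 ≤ At i' l l := fun i' => psd_diag_nonneg (hAtpsd i') l
    have hsum : ∑ i', At i' l l = 0 := by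
      have := congrFun (congrFun hsumAt l) l
      simpa [Matrix.sum_apply, Matrix.diagonal_apply_eq, hl] using this
    have h0 : At i l l = 0 :=
      (Finset.sum_eq_zero_iff_of_nonneg (fun i' _ => hdiag i')).mp hsum i (Finset.mem_univ i)
    exact psd_row_col_zero (hAtpsd i) l h0
  -- the key sandwich identity
  have key : ∀ i, diagonal f * (diagonal e * At i * diagonal e) * diagonal f = At i := by
    intro i
    ext l m
    simp only [Matrix.diagonal_mul, Matrix.mul_diagonal]
    by_cases hl : μ l = 0
    · rw [(hAtzero i l hl m).1]; ring
    · by_cases hm : μ m = 0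
      · rw [(hAtzero i m hm l).2]; ring
      · have h1 : f l * (e l * At i l m * e m) * f m
            = (f l * e l) * At i l m * (e m * f m) := by ring
        rw [h1, hfe l, hef m]
        simp [hPdef, hl, hm]
  -- psd of rescaled matrices
  have hA'psd : ∀ i, (diagonal e * At i * diagonal e).PosSemidef := by
    intro i
    have := (hAtpsd i).mul_mul_conjTranspose_same (diagonal e)
    simpa [Matrix.diagonal_conjTranspose] using this
  have hB'psd : ∀ j, (diagonal f * Bt j * diagonal f).PosSemidef := by
    intro j
    have := (hBtpsd j).mul_mul_conjTranspose_same (diagonal f)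
    simpa [Matrix.diagonal_conjTranspose] using this
  -- sum of rescaled A's is the diagonal projection
  have hsumA' : ∑ i, diagonal e * At i * diagonal e = diagonal P := by
    have h1 : ∑ i, diagonal e * At i * diagonal e
        = diagonal e * (∑ i, At i) * diagonal e := by
      simp [Finset.mul_sum, Finset.sum_mul]
    rw [h1, hsumAt, Matrix.diagonal_mul_diagonal, Matrix.diagonal_mul_diagonal]
    exact congrArg Matrix.diagonal (funext fun l => heμe l)
  refine ⟨fun i => diagonal e * At i * diagonal e, fun j => diagonal f * Bt j * diagonal f,
    ⟨hA'psd, hB'psd, ?_⟩, ?_, ?_⟩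
  · intro i j
    rw [show diagonal e * At i * diagonal e * (diagonal f * Bt j * diagonal f)
        = ((diagonal e * At i * diagonal e * diagonal f) * Bt j) * diagonal f by noncomm_ring,
      Matrix.trace_mul_comm,
      show diagonal f * (diagonal e * At i * diagonal e * diagonal f * Bt j)
        = (diagonal f * (diagonal e * At i * diagonal e) * diagonal f) * Bt j by noncomm_ring,
      key i]
    exact (htr i j).symm
  · intro i
    calc (diagonal e * At i * diagonal e).trace
        ≤ ∑ i', (diagonal e * At i' * diagonal e).trace :=
          Finset.single_le_sum (fun i' _ => psd_trace_nonneg (hA'psd i')) (Finset.mem_univ i)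
      _ = (diagonal P).trace := by rw [← Matrix.trace_sum, hsumA']
      _ = ∑ l, P l := Matrix.trace_diagonal P
      _ ≤ ∑ _l : Fin k, (1 : ℝ) :=
          Finset.sum_le_sum (fun l _ => by by_cases hl : μ l = 0 <;> simp [hPdef, hl])
      _ = k := by simp
  · intro j
    rw [Matrix.trace_mul_comm, ← mul_assoc, Matrix.diagonal_mul_diagonal]
    have h2 : (diagonal fun l => f l * f l) = ∑ i, At i := by
      rw [hsumAt]; exact congrArg Matrix.diagonal (funext fun l => hff l)
    rw [h2, Finset.sum_mul, Matrix.trace_sum]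
    exact Finset.sum_congr rfl fun i _ => htr i j

theorem psdFact_rescaled {p q k : ℕ} (M : Matrix (Fin p) (Fin q) ℝ)
    (hM : ∀ i j, 0 ≤ M i j) (h : HasPsdFact M k) :
    ∃ (A : Fin p → Matrix (Fin k) (Fin k) ℝ) (B : Fin q → Matrix (Fin k) (Fin k) ℝ),
      IsPsdFact M A B ∧ (∀ i, (A i).trace ≤ k) ∧ ∀ j, (B j).trace = ∑ i, M i j := by
  obtain ⟨A, B, hA, hB, hAB⟩ := h
  exact psdFact_rescaled' M A B hA hB hAB
end

section
/- Let M_n be the n×n Euclidean distance matrix with entries (M_n)_{ij} = (i−j)². Then rank(M_n) ≤ 3 for all n, and rank_+(M_n) ≥ log₂(n), where rank_+ denotes the nonnegative rank. -/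
open Matrix

/-- `M` admits a nonnegative factorization of size `k`. -/
def HasNonnegFact {m n : Type*} (M : Matrix m n ℝ) (k : ℕ) : Prop :=
  ∃ (a : m → Fin k → ℝ) (b : n → Fin k → ℝ),
    (∀ i t, 0 ≤ a i t) ∧ (∀ j t, 0 ≤ b j t) ∧ ∀ i j, M i j = ∑ t, a i t * b j t

/-- The nonnegative rank of `M`. -/
noncomputable def nonnegRank {m n : Type*} (M : Matrix m n ℝ) : ℕ :=
  sInf {k | HasNonnegFact M k}

lemma nonnegfact_card_le {n k : ℕ} {M : Matrix (Fin n) (Fin n) ℝ}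
    (hdiag : ∀ i, M i i = 0) (hoff : ∀ i j, i ≠ j → M i j ≠ 0)
    (h : HasNonnegFact M k) : n ≤ 2 ^ k := by
  obtain ⟨a, b, ha, hb, hM⟩ := h
  set T : Fin n → Finset (Fin k) := fun j => Finset.univ.filter (fun t => b j t ≠ 0) with hT
  have hinj : Function.Injective T := by
    intro i j hij
    by_contra hne
    have hMij : M i j ≠ 0 := hoff i j hne
    have hex : ∃ t, a i t * b j t ≠ 0 := by
      by_contra hall
      push_neg at hall
      exact hMij (by rw [hM i j]; exact Finset.sum_eq_zero fun t _ => hall t)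
    obtain ⟨t, ht⟩ := hex
    have hat : a i t ≠ 0 := fun h0 => ht (by simp [h0])
    have hbt : b j t ≠ 0 := fun h0 => ht (by simp [h0])
    have htTi : t ∈ T i := by rw [hij]; simp [hT, hbt]
    have hbit : b i t ≠ 0 := by simpa [hT] using htTi
    have hsum : ∑ s, a i s * b i s = 0 := by rw [← hM i i, hdiag]
    have hz := (Finset.sum_eq_zero_iff_of_nonneg
      (fun s _ => mul_nonneg (ha i s) (hb i s))).mp hsum t (Finset.mem_univ t)
    exact (mul_ne_zero hat hbit) hz
  calc n = Fintype.card (Fin n) := (Fintype.card_fin n).symm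
    _ ≤ Fintype.card (Finset (Fin k)) := Fintype.card_le_of_injective T hinj
    _ = 2 ^ k := by simp [Fintype.card_finset]

theorem euclidean_distance_matrix_ranks (n : ℕ) :
    (Matrix.of fun i j : Fin n => ((i : ℝ) - (j : ℝ)) ^ 2).rank ≤ 3 ∧
    Real.logb 2 n ≤
      (nonnegRank (Matrix.of fun i j : Fin n => ((i : ℝ) - (j : ℝ)) ^ 2) : ℝ) := by
  set M : Matrix (Fin n) (Fin n) ℝ := Matrix.of fun i j : Fin n => ((i : ℝ) - (j : ℝ)) ^ 2 with hMdef
  constructor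
  · -- rank ≤ 3
    have hfac : M = (Matrix.of fun (i : Fin n) (t : Fin 3) => ![(i:ℝ)^2, (i:ℝ), 1] t) *
        (Matrix.of fun (t : Fin 3) (j : Fin n) => ![1, -2*(j:ℝ), (j:ℝ)^2] t) := by
      ext i j
      simp [hMdef, Matrix.mul_apply, Fin.sum_univ_three]
      ring
    rw [hfac]
    calc _ ≤ (Matrix.of fun (i : Fin n) (t : Fin 3) => ![(i:ℝ)^2, (i:ℝ), 1] t).rank :=
          Matrix.rank_mul_le_left _ _
      _ ≤ Fintype.card (Fin 3) := Matrix.rank_le_card_width _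
      _ = 3 := by simp
  · -- nonneg rank
    have hdiag : ∀ i, M i i = 0 := by intro i; simp [hMdef]
    have hoff : ∀ i j : Fin n, i ≠ j → M i j ≠ 0 := by
      intro i j hne
      have : (i : ℝ) ≠ (j : ℝ) := by
        exact_mod_cast fun h => hne (Fin.val_injective (by exact_mod_cast h))
      simp only [hMdef, Matrix.of_apply]
      exact pow_ne_zero _ (sub_ne_zero.mpr this)
    have hmem : HasNonnegFact M n := by
      refine ⟨fun i t => if i = t then 1 else 0, fun j t => M t j, ?_, ?_, ?_⟩
      · intro i t; by_cases h : i = t <;> simp [h]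
      · intro j t; simp [hMdef]; positivity
      · intro i j
        simp [ite_mul, Finset.sum_ite_eq]
    have hr : nonnegRank M ∈ {k | HasNonnegFact M k} := Nat.sInf_mem ⟨n, hmem⟩
    have hn : n ≤ 2 ^ (nonnegRank M) := nonnegfact_card_le hdiag hoff hr
    rcases Nat.eq_zero_or_pos n with h0 | hpos
    · simp [h0]
    · have h1 : (1 : ℝ) < 2 := one_lt_two
      have hx : (0 : ℝ) < n := by exact_mod_cast hpos
      have hle : (n : ℝ) ≤ (2 : ℝ) ^ (nonnegRank M) := by exact_mod_cast hn
      have hy : (0 : ℝ) < (2 : ℝ) ^ (nonnegRank M) := by positivity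
      calc Real.logb 2 n ≤ Real.logb 2 ((2:ℝ) ^ (nonnegRank M)) :=
            (Real.logb_le_logb h1 hx hy).mpr hle
        _ = (nonnegRank M : ℝ) := by
            rw [Real.logb_pow, Real.logb_self_eq_one h1, mul_one]
end
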